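/- Let B[x_1,τ_1], …, B[x_n,τ_n] be closed disks in the Euclidean plane ℝ² (with all τ_i > 0) such that no line of ℝ² divides them into two non-empty families without touching or intersecting at least one disk. Then ⋃_{i=1}^n B[x_i,τ_i] is contained in the closed disk of radius ∑_{i=1}^n τ_i centered at (∑_{i=1}^n τ_i x_i)/(∑_{i=1}^n τ_i); in particular, the disks can be covered by a single disk of radius ∑_{i=1}^n τ_i. -/

import Mathlib

open Set Metric
open scoped RealInnerProductSpace

private lemma cover_length {n : ℕ} (c d : Fin n → ℝ) (p q : ℝ)
    (h : Set.Icc p q ⊆ ⋃ k, Set.Icc (c k) (d k)) :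
    q - p ≤ ∑ k, max (d k - c k) 0 := by
  have h1 : MeasureTheory.volume (Set.Icc p q) ≤
      ∑ k, MeasureTheory.volume (Set.Icc (c k) (d k)) := by
    calc MeasureTheory.volume (Set.Icc p q)
        ≤ MeasureTheory.volume (⋃ k, Set.Icc (c k) (d k)) := MeasureTheory.measure_mono h
      _ ≤ ∑' k, MeasureTheory.volume (Set.Icc (c k) (d k)) := MeasureTheory.measure_iUnion_le _
      _ = ∑ k, MeasureTheory.volume (Set.Icc (c k) (d k)) := tsum_fintype _
  rw [Real.volume_Icc] at h1
  have h2 : ∀ k, MeasureTheory.volume (Set.Icc (c k) (d k))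
      = ENNReal.ofReal (max (d k - c k) 0) := by
    intro k; rw [Real.volume_Icc]
    rcases le_total (d k - c k) 0 with h | h
    · rw [ENNReal.ofReal_eq_zero.2 h, max_eq_right h, ENNReal.ofReal_zero]
    · rw [max_eq_left h]
  simp_rw [h2] at h1
  rw [← ENNReal.ofReal_sum_of_nonneg (fun k _ => le_max_right _ _)] at h1
  by_cases hpq : q - p ≤ 0
  · exact hpq.trans (Finset.sum_nonneg fun k _ => le_max_right _ _)
  · exact (ENNReal.ofReal_le_ofReal_iff (Finset.sum_nonneg fun k _ => le_max_right _ _)).1 h1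

private lemma oneD {n : ℕ} (hn : 0 < n) (a τ : Fin n → ℝ) (hτ : ∀ i, 0 < τ i)
    (hsep : ∀ β : ℝ, (∃ j, a j + τ j < β) → (∃ j, β < a j - τ j) →
      ∃ k, a k - τ k ≤ β ∧ β ≤ a k + τ k) (i : Fin n) :
    (∑ j, τ j) * (a i + τ i) ≤ (∑ j, τ j * a j) + (∑ j, τ j) ^ 2 := by
  haveI : Nonempty (Fin n) := Fin.pos_iff_nonempty.mp hn
  obtain ⟨i₀, -, hi₀⟩ := Finset.exists_max_image Finset.univ (fun k => a k + τ k)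
    Finset.univ_nonempty
  obtain ⟨i₁, -, hi₁⟩ := Finset.exists_min_image Finset.univ (fun k => a k - τ k)
    Finset.univ_nonempty
  simp only [Finset.mem_univ, forall_const, true_implies] at hi₀ hi₁
  set M := a i₀ + τ i₀ with hM
  set T := ∑ j, τ j with hT
  have hTpos : 0 < T := Finset.sum_pos (fun j _ => hτ j) Finset.univ_nonempty
  -- covering property
  have hcov : ∀ β, a i₁ - τ i₁ ≤ β → β ≤ M → ∃ k, a k - τ k ≤ β ∧ β ≤ a k + τ k := by
    intro β hm hMb
    by_contra hno
    push_neg at hno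
    have h1 : ∃ j, a j + τ j < β := ⟨i₁, lt_of_not_ge fun h => absurd (hno i₁ hm) (not_lt.2 h)⟩
    have h2 : ∃ j, β < a j - τ j := by
      refine ⟨i₀, ?_⟩
      by_contra h
      push_neg at h
      exact absurd hMb (not_le.2 (hno i₀ h))
    obtain ⟨k, hk1, hk2⟩ := hsep β h1 h2
    exact absurd hk2 (not_le.2 (hno k hk1))
  -- e j k : contribution of interval k to covering [b j, M]
  set e : Fin n → Fin n → ℝ :=
    fun j k => max ((a k + τ k) - max (a k - τ k) (a j + τ j)) 0 with he
  have hlen : ∀ j, M - (a j + τ j) ≤ ∑ k, e j k := by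
    intro j
    apply cover_length (fun k => max (a k - τ k) (a j + τ j)) (fun k => a k + τ k)
    intro β ⟨hb1, hb2⟩
    have hm : a i₁ - τ i₁ ≤ β :=
      le_trans (le_trans (hi₁ j) (by linarith [hτ j])) hb1
    obtain ⟨k, hk1, hk2⟩ := hcov β hm hb2
    exact Set.mem_iUnion.2 ⟨k, max_le hk1 hb1, hk2⟩
  -- basic facts about e
  have he_self : ∀ j, e j j = 0 := by
    intro j
    simp only [he]
    rw [max_eq_right (by linarith [hτ j] : a j - τ j ≤ a j + τ j)]
    simp
  have he_zero : ∀ j k, a k + τ k ≤ a j + τ j → e j k = 0 := by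
    intro j k h
    simp only [he]
    rw [max_eq_right]
    have := le_max_right (a k - τ k) (a j + τ j)
    linarith
  have he_le : ∀ j k, e j k ≤ 2 * τ k := by
    intro j k
    simp only [he]
    apply max_le _ (by linarith [hτ k])
    have := le_max_left (a k - τ k) (a j + τ j)
    linarith
  have he_nonneg : ∀ j k, 0 ≤ e j k := fun j k => le_max_right _ _
  -- pairwise bound
  have hpair : ∀ j k, τ j * e j k + τ k * e k j ≤
      (if j = k then 0 else 2 * (τ j * τ k)) := by
    intro j k
    by_cases hjk : j = k
    · subst hjk; simp [he_self]
    · simp only [hjk, if_false]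
      rcases le_total (a k + τ k) (a j + τ j) with h | h
      · rw [he_zero j k h]
        have h1 : e k j ≤ 2 * τ j := he_le k j
        have := (hτ j).le; have := (hτ k).le
        nlinarith
      · rw [he_zero k j h]
        have h1 : e j k ≤ 2 * τ k := he_le j k
        have := (hτ j).le; have := (hτ k).le
        nlinarith
  -- sum bound: S ≤ T² - ∑ τ²
  have hS : ∑ j, ∑ k, τ j * e j k ≤ T ^ 2 - ∑ j, τ j * τ j := by
    have hswap : ∑ j, ∑ k, τ j * e j k = ∑ j, ∑ k, τ k * e k j := by
      rw [Finset.sum_comm]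
    have hsum2 : (∑ j, ∑ k, τ j * e j k) + (∑ j, ∑ k, τ j * e j k) ≤
        ∑ j, ∑ k, (if j = k then 0 else 2 * (τ j * τ k)) := by
      calc (∑ j, ∑ k, τ j * e j k) + (∑ j, ∑ k, τ j * e j k)
          = ∑ j, ∑ k, (τ j * e j k + τ k * e k j) := by
            nth_rewrite 2 [hswap]
            simp only [← Finset.sum_add_distrib]
        _ ≤ _ := Finset.sum_le_sum fun j _ => Finset.sum_le_sum fun k _ => hpair j k
    have hR : ∑ j, ∑ k, (if j = k then (0:ℝ) else 2 * (τ j * τ k)) =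
        2 * (T ^ 2 - ∑ j, τ j * τ j) := by
      have hrow : ∀ j : Fin n, ∑ k, (if j = k then (0:ℝ) else 2 * (τ j * τ k)) =
          2 * (τ j * T) - 2 * (τ j * τ j) := by
        intro j
        have hpt : ∀ k : Fin n, (if j = k then (0:ℝ) else 2 * (τ j * τ k)) =
            2 * (τ j * τ k) - (if j = k then 2 * (τ j * τ k) else 0) := by
          intro k; split <;> ring
        rw [Finset.sum_congr rfl (fun k _ => hpt k), Finset.sum_sub_distrib,
          Finset.sum_ite_eq Finset.univ j (fun k => 2 * (τ j * τ k))]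
        simp only [Finset.mem_univ, if_true, hT, Finset.mul_sum]
      rw [Finset.sum_congr rfl (fun j _ => hrow j), Finset.sum_sub_distrib]
      have hA : ∑ x : Fin n, 2 * (τ x * T) = 2 * T ^ 2 := by
        rw [show (2:ℝ) * T ^ 2 = (∑ j, τ j) * (2 * T) from by rw [← hT]; ring,
          Finset.sum_mul]
        exact Finset.sum_congr rfl fun _ _ => by ring
      have hB : ∑ x : Fin n, 2 * (τ x * τ x) = 2 * ∑ j, τ j * τ j := by
        rw [Finset.mul_sum]
      rw [hA, hB]; ring
    linarith [hsum2, hR.le]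
  -- assemble
  have hmain : ∑ j, τ j * (M - a j) ≤ T ^ 2 := by
    have h1 : ∑ j, τ j * (M - a j) =
        (∑ j, τ j * τ j) + ∑ j, τ j * (M - (a j + τ j)) := by
      rw [← Finset.sum_add_distrib]
      exact Finset.sum_congr rfl fun j _ => by ring
    have h2 : ∑ j, τ j * (M - (a j + τ j)) ≤ ∑ j, ∑ k, τ j * e j k := by
      apply Finset.sum_le_sum
      intro j _
      rw [← Finset.mul_sum]
      exact mul_le_mul_of_nonneg_left (hlen j) (hτ j).le
    linarith
  have hfin : T * M ≤ (∑ j, τ j * a j) + T ^ 2 := by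
    have : ∑ j, τ j * (M - a j) = T * M - ∑ j, τ j * a j := by
      rw [hT, Finset.sum_mul, ← Finset.sum_sub_distrib]
      exact Finset.sum_congr rfl fun j _ => by ring
    linarith [hmain]
  calc T * (a i + τ i) ≤ T * M := by
        apply mul_le_mul_of_nonneg_left (hi₀ i) hTpos.le
    _ ≤ _ := hfin


/-- **Theorem of Goodman and Goodman (Erdős' problem).**
If no line of `ℝ²` divides the disks `B[xᵢ, τᵢ]` into two non-empty families
without touching or intersecting at least one disk, then the disks are covered
by the disk of radius `∑ τᵢ` centered at `(∑ τᵢ xᵢ) / (∑ τᵢ)`.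
A line is `{y | ⟪u, y⟫ = α}` with `u ≠ 0`; it divides the family badly if it is
disjoint from every disk while each open half-plane contains at least one disk. -/
theorem stmt_1 (n : ℕ) (hn : 0 < n)
    (x : Fin n → EuclideanSpace ℝ (Fin 2)) (τ : Fin n → ℝ) (hτ : ∀ i, 0 < τ i)
    (hns : ¬ (∃ (u : EuclideanSpace ℝ (Fin 2)) (α : ℝ), u ≠ 0 ∧
      (∀ i, ∀ y ∈ closedBall (x i) (τ i), ⟪u, y⟫ ≠ α) ∧
      (∃ i, ∀ y ∈ closedBall (x i) (τ i), ⟪u, y⟫ < α) ∧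
      (∃ j, ∀ y ∈ closedBall (x j) (τ j), α < ⟪u, y⟫))) :
    (⋃ i, closedBall (x i) (τ i)) ⊆
      closedBall ((∑ i, τ i)⁻¹ • ∑ i, τ i • x i) (∑ i, τ i) := by
  haveI : Nonempty (Fin n) := Fin.pos_iff_nonempty.mp hn
  intro y hy
  rw [Set.mem_iUnion] at hy
  obtain ⟨i, hyi⟩ := hy
  set T := ∑ j, τ j with hT
  have hTpos : 0 < T := Finset.sum_pos (fun j _ => hτ j) Finset.univ_nonempty
  set c : EuclideanSpace ℝ (Fin 2) := T⁻¹ • ∑ j, τ j • x j with hc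
  rw [mem_closedBall, dist_eq_norm]
  by_cases hyc : y = c
  · simpa [hyc] using hTpos.le
  have key : ∀ u : EuclideanSpace ℝ (Fin 2), ‖u‖ = 1 → ⟪u, y - c⟫ ≤ T := by
    intro u hu
    have hune : u ≠ 0 := fun h => by simp [h] at hu
    -- projection of each ball lies in the corresponding interval
    have hball : ∀ k, ∀ z ∈ closedBall (x k) (τ k), |⟪u, z⟫ - ⟪u, x k⟫| ≤ τ k := by
      intro k z hz
      rw [← inner_sub_right]
      calc |⟪u, z - x k⟫| ≤ ‖u‖ * ‖z - x k‖ := abs_real_inner_le_norm _ _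
        _ ≤ τ k := by
            rw [hu, one_mul, ← dist_eq_norm]
            exact mem_closedBall.1 hz
    -- no separating point on the line spanned by u
    have hsep1 : ∀ β : ℝ, (∃ j, ⟪u, x j⟫ + τ j < β) → (∃ j, β < ⟪u, x j⟫ - τ j) →
        ∃ k, ⟪u, x k⟫ - τ k ≤ β ∧ β ≤ ⟪u, x k⟫ + τ k := by
      intro β h1 h2
      by_contra hno
      push_neg at hno
      apply hns
      refine ⟨u, β, hune, ?_, ?_, ?_⟩
      · intro k z hz heq
        have h := hball k z hz
        rw [heq] at h
        have h' := abs_le.1 h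
        exact absurd (hno k (by linarith [h'.2])) (not_lt.2 (by linarith [h'.1]))
      · obtain ⟨j, hj⟩ := h1
        refine ⟨j, fun z hz => ?_⟩
        have h := (abs_le.1 (hball j z hz)).2
        linarith
      · obtain ⟨j, hj⟩ := h2
        refine ⟨j, fun z hz => ?_⟩
        have h := (abs_le.1 (hball j z hz)).1
        linarith
    have h1D := oneD hn (fun k => ⟪u, x k⟫) τ hτ hsep1 i
    rw [← hT] at h1D
    have h1D' : ⟪u, x i⟫ + τ i ≤ T⁻¹ * (∑ j, τ j * ⟪u, x j⟫) + T := by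
      rw [← mul_le_mul_iff_right₀ hTpos]
      calc T * (⟪u, x i⟫ + τ i) ≤ (∑ j, τ j * ⟪u, x j⟫) + T ^ 2 := h1D
        _ = T * (T⁻¹ * (∑ j, τ j * ⟪u, x j⟫) + T) := by field_simp
    have hyb : ⟪u, y⟫ ≤ ⟪u, x i⟫ + τ i := by
      have := (abs_le.1 (hball i y hyi)).2
      linarith
    have hcb : ⟪u, c⟫ = T⁻¹ * (∑ j, τ j * ⟪u, x j⟫) := by
      rw [hc, real_inner_smul_right, inner_sum]
      congr 1
      exact Finset.sum_congr rfl fun j _ => real_inner_smul_right _ _ _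
    rw [inner_sub_right, hcb]
    linarith
  -- take u in the direction of y - c
  have hne : y - c ≠ 0 := sub_ne_zero.2 hyc
  have hnn : ‖y - c‖ ≠ 0 := norm_ne_zero_iff.2 hne
  have hu : ‖(‖y - c‖⁻¹ • (y - c) : EuclideanSpace ℝ (Fin 2))‖ = 1 := by
    rw [norm_smul, norm_inv, norm_norm, inv_mul_cancel₀ hnn]
  have := key (‖y - c‖⁻¹ • (y - c)) hu
  rw [real_inner_smul_left, real_inner_self_eq_norm_sq] at this
  calc ‖y - c‖ = ‖y - c‖⁻¹ * ‖y - c‖ ^ 2 := by field_simp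
    _ ≤ T := this
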